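/- arXiv:1412.2894 — 2 statements merged into one kernel-verified Lean document; each statement's English description precedes it below -/
import Mathlib

section
/- Let G be a finite graph, S a subset of its vertices, and ℓ ≥ 1 an integer. Let H be a frame in G, let X ⊆ V(H) be a wide set containing all branch vertices of H, and let P be an H-path of G − X whose two endvertices lie in two distinct connected components of H − X. If every cycle of H ∪ P that passes through P is an S-cycle, then H ∪ P is again a frame, and H ∪ P has strictly more branch vertices than H. -/
open SimpleGraph Walk

section FrameAuxSec

open SimpleGraph Walk

variable {V : Type*} {G : SimpleGraph V}

namespace FrameAux

lemma loop_path_nil {v : V} {p : G.Walk v v} (hp : p.IsPath) : p = Walk.nil :=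
  congrArg Subtype.val (SimpleGraph.Path.loop_eq (⟨p, hp⟩ : G.Path v v))

lemma first_edge_mem {x y : V} (p : G.Walk x y) (hnn : ¬ p.Nil) :
    s(x, p.getVert 1) ∈ p.edges := by
  have h := p.cons_tail_eq hnn
  have h2 : (Walk.cons (p.adj_snd hnn) p.tail).edges = p.edges := by rw [h]
  rw [Walk.edges_cons] at h2
  rw [← h2]
  exact List.mem_cons_self

lemma nbr_empty_of_not_mem_support {x y u : V} (p : G.Walk x y) (h : u ∉ p.support) :
    p.toSubgraph.neighborSet u = ∅ := by
  ext w
  simp only [Subgraph.mem_neighborSet, Set.mem_empty_iff_false, iff_false]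
  intro hadj
  exact h ((Walk.mem_verts_toSubgraph p).1 (p.toSubgraph.edge_vert hadj))

lemma H_nbr_empty {H : G.Subgraph} {u : V} (h : u ∉ H.verts) :
    H.neighborSet u = ∅ := by
  ext w
  simp only [Subgraph.mem_neighborSet, Set.mem_empty_iff_false, iff_false]
  intro hadj
  exact h (H.edge_vert hadj)

lemma nbr_start {x y : V} (p : G.Walk x y) (hp : p.IsPath) (hnn : ¬ p.Nil) :
    p.toSubgraph.neighborSet x = {p.getVert 1} := by
  cases p with
  | nil => simp at hnn
  | cons h q =>
    rename_i z
    obtain ⟨hq, hxs⟩ := (Walk.cons_isPath_iff _ _).1 hp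
    have hg : (Walk.cons h q).getVert 1 = z := by
      simp [Walk.getVert_cons_succ]
    rw [hg]
    show (G.subgraphOfAdj h ⊔ q.toSubgraph).neighborSet x = {z}
    rw [Subgraph.neighborSet_sup, SimpleGraph.neighborSet_fst_subgraphOfAdj,
      nbr_empty_of_not_mem_support q hxs, Set.union_empty]

lemma nbr_interior {x y : V} (p : G.Walk x y) (hp : p.IsPath) :
    ∀ u ∈ p.support, u ≠ x → u ≠ y →
      ∃ w₁ w₂ : V, w₁ ≠ w₂ ∧ p.toSubgraph.neighborSet u = {w₁, w₂} := by
  induction p with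
  | nil =>
    intro u hu hux _
    simp only [Walk.support_nil, List.mem_singleton] at hu
    exact absurd hu hux
  | cons h q ih =>
    rename_i x z y
    intro u hu hux huy
    obtain ⟨hq, hxs⟩ := (Walk.cons_isPath_iff _ _).1 hp
    have huq : u ∈ q.support := by
      have h5 : u ∈ x :: q.support := by rw [← Walk.support_cons]; exact hu
      rcases List.mem_cons.mp h5 with rfl | h6
      · exact absurd rfl hux
      · exact h6
    by_cases huz : u = z
    · subst huz
      have hnnq : ¬ q.Nil := Walk.not_nil_of_ne huy
      refine ⟨x, q.getVert 1, ?_, ?_⟩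
      · intro hxg
        have : s(u, q.getVert 1) ∈ q.edges := first_edge_mem q hnnq
        exact hxs (hxg ▸ Walk.snd_mem_support_of_mem_edges q this)
      · show (G.subgraphOfAdj h ⊔ q.toSubgraph).neighborSet u = _
        rw [Subgraph.neighborSet_sup, SimpleGraph.neighborSet_snd_subgraphOfAdj,
          nbr_start q hq hnnq]
        ext w
        simp only [Set.mem_union, Set.mem_singleton_iff, Set.mem_insert_iff]
    · obtain ⟨w₁, w₂, hne, hset⟩ := ih hq u huq huz huy
      refine ⟨w₁, w₂, hne, ?_⟩
      show (G.subgraphOfAdj h ⊔ q.toSubgraph).neighborSet u = _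
      rw [Subgraph.neighborSet_sup,
        SimpleGraph.neighborSet_subgraphOfAdj_of_ne_of_ne h hux huz, hset,
        Set.empty_union]

lemma cycle_two_edges [DecidableEq V] {v u : V} {c : G.Walk v v} (hc : c.IsCycle)
    (hu : u ∈ c.support) :
    ∃ w₁ w₂, w₁ ≠ w₂ ∧ s(u, w₁) ∈ c.edges ∧ s(u, w₂) ∈ c.edges := by
  have hc2 := hc.rotate hu
  have hperm := c.rotate_edges _ hu
  have hnn' : ¬ (c.rotate _ hu).Nil := hc2.not_nil
  obtain ⟨z, h, q, hq⟩ := Walk.not_nil_iff.mp hnn'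
  rw [hq] at hc2 hperm
  obtain ⟨hqp, hmem⟩ := (Walk.cons_isCycle_iff q h).1 hc2
  have hlen : 3 ≤ q.length + 1 := by
    have := hc2.three_le_length
    simpa using this
  have hnnq : ¬ q.Nil := by
    rw [Walk.nil_iff_length_eq]
    omega
  have hnnr : ¬ q.reverse.Nil := by
    rw [Walk.nil_iff_length_eq, Walk.length_reverse]
    rw [Walk.nil_iff_length_eq] at hnnq
    exact hnnq
  set w₂ := q.reverse.getVert 1 with hw₂
  have he₂ : s(u, w₂) ∈ q.reverse.edges := first_edge_mem q.reverse hnnr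
  rw [Walk.edges_reverse, List.mem_reverse] at he₂
  refine ⟨z, w₂, ?_, ?_, ?_⟩
  · intro hzw
    rw [← hzw] at he₂
    exact hmem he₂
  · exact hperm.perm.mem_iff.1 (List.mem_cons_self)
  · exact hperm.perm.mem_iff.1 (List.mem_cons_of_mem _ he₂)

lemma mem_tail_of_closed {v u : V} (c : G.Walk v v) (hnn : ¬ c.Nil) (hu : u ∈ c.support) :
    u ∈ c.support.tail := by
  rcases (Walk.mem_support_iff c).1 hu with rfl | h
  · have h7 := congrArg List.tail (Walk.cons_support_tail hnn)
    simp only [List.tail_cons] at h7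
    rw [← h7]
    exact Walk.end_mem_support _
  · exact h

lemma adj_cons_cases {x z y w : V} (h : G.Adj x z) (r : G.Walk z y)
    (hadj : (Walk.cons h r).toSubgraph.Adj z w) (hr : r.IsPath) (hnn : ¬ r.Nil) :
    w = x ∨ w = r.getVert 1 := by
  have hadj' : (G.subgraphOfAdj h ⊔ r.toSubgraph).Adj z w := hadj
  rcases (Subgraph.sup_adj).1 hadj' with h1 | h1
  · have h2 : w ∈ (G.subgraphOfAdj h).neighborSet z := h1
    rw [SimpleGraph.neighborSet_snd_subgraphOfAdj] at h2
    exact Or.inl h2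
  · have h2 : w ∈ r.toSubgraph.neighborSet z := h1
    rw [nbr_start r hr hnn] at h2
    exact Or.inr h2

lemma star_step [DecidableEq V] {v x z y : V} {c : G.Walk v v} (hc : c.IsCycle)
    (h : G.Adj x z) (r : G.Walk z y) (hp : (Walk.cons h r).IsPath) (hnn : ¬ r.Nil)
    (hzc : z ∈ c.support)
    (hA : ∀ u w, u ∈ (Walk.cons h r).support → u ≠ x → u ≠ y →
      s(u, w) ∈ c.edges → (Walk.cons h r).toSubgraph.Adj u w) :
    s(x, z) ∈ c.edges ∧ s(z, r.getVert 1) ∈ c.edges := by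
  obtain ⟨hr, hxs⟩ := (Walk.cons_isPath_iff _ _).1 hp
  have hzx : z ≠ x := h.ne'
  have hzy : z ≠ y := by
    intro hzy
    subst hzy
    exact hnn (by rw [loop_path_nil hr]; exact Walk.Nil.nil)
  have hzmem : z ∈ (Walk.cons h r).support := by simp
  obtain ⟨w₁, w₂, hw12, he₁, he₂⟩ := cycle_two_edges hc hzc
  have hc₁ := adj_cons_cases h r (hA z w₁ hzmem hzx hzy he₁) hr hnn
  have hc₂ := adj_cons_cases h r (hA z w₂ hzmem hzx hzy he₂) hr hnn
  rcases hc₁ with rfl | rfl <;> rcases hc₂ with rfl | rfl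
  · exact absurd rfl hw12
  · exact ⟨by rwa [Sym2.eq_swap] at he₁, he₂⟩
  · exact ⟨by rwa [Sym2.eq_swap] at he₂, he₁⟩
  · exact absurd rfl hw12

lemma prop_edges [DecidableEq V] {v : V} {c : G.Walk v v} (hc : c.IsCycle) :
    ∀ {x y : V} (r : G.Walk x y), r.IsPath →
      (∀ u w, u ∈ r.support → u ≠ x → u ≠ y → s(u, w) ∈ c.edges → r.toSubgraph.Adj u w) →
      (∃ e ∈ r.edges, e ∈ c.edges) → ∀ e ∈ r.edges, e ∈ c.edges := by
  intro x₀ y₀ r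
  induction r with
  | nil => intro _ _ _ e he; simp at he
  | @cons x z y h r ih =>
    intro hp hA hex
    obtain ⟨hr, hxs⟩ := (Walk.cons_isPath_iff _ _).1 hp
    have hA' : ∀ u w, u ∈ r.support → u ≠ z → u ≠ y → s(u, w) ∈ c.edges →
        r.toSubgraph.Adj u w := by
      intro u w hu huz huy he
      have hux : u ≠ x := fun hq => hxs (hq ▸ hu)
      have h1 := hA u w (by simp [hu]) hux huy he
      have h2 : (G.subgraphOfAdj h ⊔ r.toSubgraph).Adj u w := h1
      rcases (Subgraph.sup_adj).1 h2 with h3 | h3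
      · exfalso
        have h4 := (G.subgraphOfAdj h).edge_vert h3
        rw [SimpleGraph.subgraphOfAdj_verts] at h4
        rcases h4 with h5 | h5
        · exact hux h5
        · exact huz h5
      · exact h3
    by_cases hnn : r.Nil
    · intro e he
      have hre : r.edges = [] := List.length_eq_zero_iff.mp
        (by rw [Walk.length_edges]; exact Walk.nil_iff_length_eq.mp hnn)
      obtain ⟨e', he', hec⟩ := hex
      rw [Walk.edges_cons, hre] at he' he
      simp only [List.mem_singleton] at he he'
      subst he; subst he'
      exact hec
    · obtain ⟨e', he', hec⟩ := hex
      rw [Walk.edges_cons] at he'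
      rcases List.mem_cons.mp he' with rfl | her
      · have hzc : z ∈ c.support := Walk.snd_mem_support_of_mem_edges c hec
        obtain ⟨h1, h2⟩ := star_step hc h r hp hnn hzc hA
        have hall := ih hr hA' ⟨s(z, r.getVert 1), first_edge_mem r hnn, h2⟩
        intro e he
        rw [Walk.edges_cons] at he
        rcases List.mem_cons.mp he with rfl | her2
        · exact hec
        · exact hall e her2
      · have hall := ih hr hA' ⟨e', her, hec⟩
        have h2 : s(z, r.getVert 1) ∈ c.edges := hall _ (first_edge_mem r hnn)
        have hzc : z ∈ c.support := Walk.fst_mem_support_of_mem_edges c h2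
        obtain ⟨h1, -⟩ := star_step hc h r hp hnn hzc hA
        intro e he
        rw [Walk.edges_cons] at he
        rcases List.mem_cons.mp he with rfl | her2
        · exact h1
        · exact hall e her2

lemma arc_side {a b : V} (q₁ : G.Walk a b) (q₂ : G.Walk b a)
    (hdisj : ∀ u, u ∈ q₁.support.tail → u ∈ q₂.support.tail → False) :
    ∀ {x y : V} (r : G.Walk x y), r.IsPath →
      (∀ u ∈ r.support, u ≠ x → u ≠ y → u ≠ a ∧ u ≠ b) →
      (∀ e ∈ r.edges, e ∈ q₁.edges ∨ e ∈ q₂.edges) →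
      (¬ r.Nil → s(x, r.getVert 1) ∈ q₁.edges) →
      ∀ e ∈ r.edges, e ∈ q₁.edges := by
  intro x₀ y₀ r
  induction r with
  | nil => intro _ _ _ _ e he; simp at he
  | @cons x z y h r ih =>
    intro hp hint hall hfirst
    obtain ⟨hr, hxs⟩ := (Walk.cons_isPath_iff _ _).1 hp
    have hfe : s(x, z) ∈ q₁.edges := by
      have h1 := hfirst Walk.not_nil_cons
      simpa [Walk.getVert_cons_succ] using h1
    intro e he
    rw [Walk.edges_cons] at he
    rcases List.mem_cons.mp he with rfl | her
    · exact hfe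
    · have hnnr : ¬ r.Nil := by
        intro hnil
        have h0 : r.edges = [] := List.length_eq_zero_iff.mp
          (by rw [Walk.length_edges]; exact Walk.nil_iff_length_eq.mp hnil)
        rw [h0] at her
        simp at her
      refine ih hr ?_ ?_ ?_ e her
      · intro u hu huz huy
        have hux : u ≠ x := fun hq => hxs (hq ▸ hu)
        exact hint u (by simp [hu]) hux huy
      · intro e' he'
        exact hall e' (by rw [Walk.edges_cons]; exact List.mem_cons_of_mem _ he')
      · intro hnn2
        rcases hall s(z, r.getVert 1)
          (by rw [Walk.edges_cons]; exact List.mem_cons_of_mem _ (first_edge_mem r hnn2))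
          with hin | hin
        · exact hin
        · exfalso
          have hzy : z ≠ y := by
            intro hq
            subst hq
            exact hnn2 (by rw [loop_path_nil hr]; exact Walk.Nil.nil)
          have hza : z ≠ a ∧ z ≠ b := hint z (by simp) h.ne' hzy
          have hz1 : z ∈ q₁.support := Walk.snd_mem_support_of_mem_edges q₁ hfe
          have hz2 : z ∈ q₂.support := Walk.fst_mem_support_of_mem_edges q₂ hin
          rw [Walk.support_eq_cons] at hz1 hz2
          rcases List.mem_cons.mp hz1 with h1 | h1
          · exact hza.1 h1
          rcases List.mem_cons.mp hz2 with h2 | h2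
          · exact hza.2 h2
          exact hdisj z h1 h2

lemma reach_del {H : G.Subgraph} {X : Set V} :
    ∀ {x y : V} (w : G.Walk x y) (hx : x ∈ H.verts) (hxX : x ∉ X)
      (hy : y ∈ H.verts) (hyX : y ∉ X),
      (∀ e ∈ w.edges, e ∈ H.edgeSet) → (∀ u ∈ w.support, u ∉ X) →
      (H.deleteVerts X).coe.Reachable ⟨x, hx, hxX⟩ ⟨y, hy, hyX⟩ := by
  intro x₀ y₀ w
  induction w with
  | nil => intro hx hxX hy hyX _ _; exact Reachable.refl _
  | @cons x z y h w ih =>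
    intro hx hxX hy hyX hedges hsupp
    have hHadj : H.Adj x z := Subgraph.mem_edgeSet.1 (hedges _ (List.mem_cons_self))
    have hz : z ∈ H.verts := H.edge_vert hHadj.symm
    have hzX : z ∉ X := hsupp z (by simp)
    have hadj : (H.deleteVerts X).coe.Adj ⟨x, hx, hxX⟩ ⟨z, hz, hzX⟩ := by
      simp only [Subgraph.coe_adj, Subgraph.deleteVerts_adj]
      exact ⟨hx, hxX, hz, hzX, hHadj⟩
    exact (hadj.reachable).trans
      (ih hz hzX hy hyX
        (fun e he => hedges e (by rw [Walk.edges_cons]; exact List.mem_cons_of_mem _ he))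
        (fun u hu => hsupp u (by rw [Walk.support_cons]; exact List.mem_cons_of_mem _ hu)))

end FrameAux

end FrameAuxSec


/-- A set `X ⊆ V(H)` is *wide* if every path in `H` whose first and last vertices
lie in `H − X` and which contains a vertex of `X` has length at least `ℓ`. -/
def IsWide {V : Type*} {G : SimpleGraph V} (ℓ : ℕ) (H : G.Subgraph) (X : Set V) : Prop :=
  X ⊆ H.verts ∧
  ∀ (a b : V) (p : G.Walk a b), p.IsPath → (∀ e ∈ p.edges, e ∈ H.edgeSet) →
    a ∈ H.verts \ X → b ∈ H.verts \ X → (∃ x ∈ X, x ∈ p.support) → ℓ ≤ p.length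

/-- A subgraph `H` of `G` is a *frame* (for `S` and `ℓ`) if every vertex of `H` has
degree `2` or `3` in `H`, and every cycle contained in `H` is a long `S`-cycle. -/
def IsFrame {V : Type*} {G : SimpleGraph V} (S : Set V) (ℓ : ℕ) (H : G.Subgraph) : Prop :=
  (∀ v ∈ H.verts, (H.neighborSet v).ncard = 2 ∨ (H.neighborSet v).ncard = 3) ∧
  (∀ (v : V) (c : G.Walk v v), c.IsCycle → (∀ e ∈ c.edges, e ∈ H.edgeSet) →
    ℓ ≤ c.length ∧ ∃ s ∈ S, s ∈ c.support)

/-- **Augmentation lemma.** Let `H` be a frame, `X ⊆ V(H)` wide and containing all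
branch vertices of `H`, and let `P` be an `H`-path of `G − X` linking two distinct
components of `H − X`. If every cycle of `H ∪ P` passing through `P` is an
`S`-cycle, then `H ∪ P` is again a frame with strictly more branch vertices. -/
theorem frame_augmentation {V : Type*} [Fintype V] {G : SimpleGraph V}
    (S : Set V) (ℓ : ℕ) (hℓ : 1 ≤ ℓ) (H : G.Subgraph) (hH : IsFrame S ℓ H)
    (X : Set V) (hX : IsWide ℓ H X)
    (hbranch : ∀ v ∈ H.verts, (H.neighborSet v).ncard = 3 → v ∈ X)
    {a b : V} (p : G.Walk a b) (hp : p.IsPath)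
    (ha : a ∈ H.verts) (haX : a ∉ X) (hb : b ∈ H.verts) (hbX : b ∉ X)
    (hint : ∀ u ∈ p.support, u ≠ a → u ≠ b → u ∉ H.verts)
    (hedge : ∃ e ∈ p.edges, e ∉ H.edgeSet)
    (havoid : ∀ u ∈ p.support, u ∉ X)
    (hsep : ¬ (H.deleteVerts X).coe.Reachable ⟨a, ha, haX⟩ ⟨b, hb, hbX⟩)
    (hScyc : ∀ (v : V) (c : G.Walk v v), c.IsCycle →
      (∀ e ∈ c.edges, e ∈ (H ⊔ p.toSubgraph).edgeSet) →
      (∃ e ∈ c.edges, e ∈ p.edges) → ∃ s ∈ S, s ∈ c.support) :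
    IsFrame S ℓ (H ⊔ p.toSubgraph) ∧
    {v : V | (H.neighborSet v).ncard = 3}.ncard <
      {v : V | ((H ⊔ p.toSubgraph).neighborSet v).ncard = 3}.ncard := by
  classical
  have hab : a ≠ b := by
    rintro rfl
    exact hsep (Reachable.refl _)
  have hnn : ¬ p.Nil := by
    obtain ⟨e, he, -⟩ := hedge
    intro hnil
    have h0 : p.edges = [] := List.length_eq_zero_iff.mp
      (by rw [Walk.length_edges]; exact Walk.nil_iff_length_eq.mp hnil)
    rw [h0] at he
    simp at he
  have hHP : ∀ e, e ∈ (H ⊔ p.toSubgraph).edgeSet ↔ e ∈ H.edgeSet ∨ e ∈ p.edges := by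
    intro e
    rw [Subgraph.edgeSet_sup, Set.mem_union, Walk.mem_edges_toSubgraph]
  -- decomposition of p
  have hcons := p.cons_tail_eq hnn
  have hp2 : (Walk.cons (p.adj_snd hnn) p.tail).IsPath := by rw [hcons]; exact hp
  obtain ⟨htp, hats⟩ := (Walk.cons_isPath_iff _ _).1 hp2
  have hed0 : s(a, p.getVert 1) :: p.tail.edges = p.edges := by
    rw [← Walk.edges_cons (p.adj_snd hnn), hcons]
  have hfeP : s(a, p.getVert 1) ∈ p.edges := FrameAux.first_edge_mem p hnn
  have hnnR : ¬ p.reverse.Nil := by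
    rw [Walk.nil_iff_length_eq, Walk.length_reverse]
    rw [Walk.nil_iff_length_eq] at hnn
    exact hnn
  have hfeR : s(b, p.reverse.getVert 1) ∈ p.edges := by
    have h1 := FrameAux.first_edge_mem p.reverse hnnR
    rwa [Walk.edges_reverse, List.mem_reverse] at h1
  -- if s(a,b) is an edge of p then p has a single edge
  have hsab : s(a, b) ∈ p.edges → p.edges = [s(a, b)] := by
    intro hmem
    rw [← hed0] at hmem
    rcases List.mem_cons.mp hmem with h1 | h1
    · have hg : b = p.getVert 1 := Sym2.congr_right.mp h1
      have hq' : (p.tail.copy hg.symm rfl).IsPath := (Walk.isPath_copy _ _ _).2 htp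
      have hnil := FrameAux.loop_path_nil hq'
      have htedges : p.tail.edges = [] := by
        have h2 := congrArg Walk.edges hnil
        rwa [Walk.edges_copy, Walk.edges_nil] at h2
      rw [← hed0, htedges, ← hg]
    · exact absurd (Walk.fst_mem_support_of_mem_edges p.tail h1) hats
  -- p's edges are never edges of H
  have hdisjPH : ∀ e, e ∈ p.edges → e ∈ H.edgeSet → False := by
    refine Sym2.ind ?_
    intro u w hep heH
    have hadj : H.Adj u w := Subgraph.mem_edgeSet.1 heH
    have hu : u ∈ p.support := Walk.fst_mem_support_of_mem_edges p hep
    have hw : w ∈ p.support := Walk.snd_mem_support_of_mem_edges p hep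
    have hne : u ≠ w := (H.adj_sub hadj).ne
    have hu' : u = a ∨ u = b := by
      by_contra hcon
      push_neg at hcon
      exact hint u hu hcon.1 hcon.2 (H.edge_vert hadj)
    have hw' : w = a ∨ w = b := by
      by_contra hcon
      push_neg at hcon
      exact hint w hw hcon.1 hcon.2 (H.edge_vert hadj.symm)
    have hsab2 : s(a, b) ∈ p.edges ∧ s(a, b) ∈ H.edgeSet := by
      rcases hu' with rfl | rfl <;> rcases hw' with rfl | rfl
      · exact absurd rfl hne
      · exact ⟨hep, heH⟩
      · exact ⟨by rwa [Sym2.eq_swap] at hep, by rwa [Sym2.eq_swap] at heH⟩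
      · exact absurd rfl hne
    obtain ⟨e', he', heH'⟩ := hedge
    rw [hsab hsab2.1] at he'
    simp only [List.mem_singleton] at he'
    subst he'
    exact heH' hsab2.2
  -- degrees
  have hdeg2 : ∀ v ∈ H.verts, v ∉ X → (H.neighborSet v).ncard = 2 := by
    intro v hv hvX
    rcases hH.1 v hv with h2 | h3
    · exact h2
    · exact absurd (hbranch v hv h3) hvX
  have hnbr_a : (H ⊔ p.toSubgraph).neighborSet a
      = insert (p.getVert 1) (H.neighborSet a) := by
    rw [Subgraph.neighborSet_sup, FrameAux.nbr_start p hp hnn, Set.union_singleton]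
  have hga : p.getVert 1 ∉ H.neighborSet a := fun hmem =>
    hdisjPH s(a, p.getVert 1) hfeP (Subgraph.mem_edgeSet.2 hmem)
  have hdeg_a : ((H ⊔ p.toSubgraph).neighborSet a).ncard = 3 := by
    rw [hnbr_a, Set.ncard_insert_of_notMem hga (Set.toFinite _), hdeg2 a ha haX]
  have hPrev : p.reverse.toSubgraph = p.toSubgraph := Walk.toSubgraph_reverse p
  have hnbr_b : (H ⊔ p.toSubgraph).neighborSet b
      = insert (p.reverse.getVert 1) (H.neighborSet b) := by
    rw [Subgraph.neighborSet_sup, ← hPrev, FrameAux.nbr_start p.reverse hp.reverse hnnR,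
      Set.union_singleton]
  have hgb : p.reverse.getVert 1 ∉ H.neighborSet b := fun hmem =>
    hdisjPH _ hfeR (Subgraph.mem_edgeSet.2 hmem)
  have hdeg_b : ((H ⊔ p.toSubgraph).neighborSet b).ncard = 3 := by
    rw [hnbr_b, Set.ncard_insert_of_notMem hgb (Set.toFinite _), hdeg2 b hb hbX]
  have hdeg_int : ∀ u ∈ p.support, u ≠ a → u ≠ b →
      ((H ⊔ p.toSubgraph).neighborSet u).ncard = 2 := by
    intro u hu hua hub
    obtain ⟨w₁, w₂, hw, hset⟩ := FrameAux.nbr_interior p hp u hu hua hub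
    rw [Subgraph.neighborSet_sup, FrameAux.H_nbr_empty (hint u hu hua hub),
      Set.empty_union, hset, Set.ncard_pair hw]
  have hnbr_same : ∀ v, v ∉ p.support →
      (H ⊔ p.toSubgraph).neighborSet v = H.neighborSet v := by
    intro v hv
    rw [Subgraph.neighborSet_sup, FrameAux.nbr_empty_of_not_mem_support p hv, Set.union_empty]
  have hdegAll : ∀ v ∈ (H ⊔ p.toSubgraph).verts,
      ((H ⊔ p.toSubgraph).neighborSet v).ncard = 2 ∨
      ((H ⊔ p.toSubgraph).neighborSet v).ncard = 3 := by
    intro v hv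
    by_cases hvp : v ∈ p.support
    · by_cases hva : v = a
      · subst hva; right; exact hdeg_a
      · by_cases hvb : v = b
        · subst hvb; right; exact hdeg_b
        · left; exact hdeg_int v hvp hva hvb
    · rw [hnbr_same v hvp]
      apply hH.1 v
      rcases (by rwa [Subgraph.verts_sup, Set.mem_union] at hv :
          v ∈ H.verts ∨ v ∈ p.toSubgraph.verts) with h1 | h1
      · exact h1
      · exact absurd ((Walk.mem_verts_toSubgraph p).1 h1) hvp
  refine ⟨⟨hdegAll, ?_⟩, ?_⟩
  · -- cycle condition
    intro v c hc hce
    by_cases hcp : ∃ e ∈ c.edges, e ∈ p.edges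
    · refine ⟨?_, hScyc v c hc hce hcp⟩
      have hA : ∀ u w, u ∈ p.support → u ≠ a → u ≠ b → s(u, w) ∈ c.edges →
          p.toSubgraph.Adj u w := by
        intro u w hu hua hub he
        have h1 := hce _ he
        rcases (Subgraph.sup_adj).1 (Subgraph.mem_edgeSet.1 h1) with h2 | h2
        · exact absurd (H.edge_vert h2) (hint u hu hua hub)
        · exact h2
      obtain ⟨e₀, he₀c, he₀p⟩ := hcp
      have hpc : ∀ e ∈ p.edges, e ∈ c.edges :=
        FrameAux.prop_edges hc p hp hA ⟨e₀, he₀p, he₀c⟩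
      have hac : a ∈ c.support := Walk.fst_mem_support_of_mem_edges c (hpc _ hfeP)
      have hbc : b ∈ c.support := Walk.fst_mem_support_of_mem_edges c (hpc _ hfeR)
      have hc' : (c.rotate _ hac).IsCycle := hc.rotate hac
      have hperm := c.rotate_edges _ hac
      have hlen_rot : (c.rotate _ hac).length = c.length := by
        have h1 := hperm.perm.length_eq
        rwa [Walk.length_edges, Walk.length_edges] at h1
      have hbc' : b ∈ (c.rotate _ hac).support := by
        have hbt : b ∈ c.support.tail := FrameAux.mem_tail_of_closed c hc.not_nil hbc
        exact List.mem_of_mem_tail ((c.support_rotate _ hac).perm.mem_iff.mpr hbt)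
      set c₂ := c.rotate _ hac with hc₂def
      set q₁ := c₂.takeUntil b hbc' with hq₁def
      set q₂ := c₂.dropUntil b hbc' with hq₂def
      have hspec : q₁.append q₂ = c₂ := c₂.take_spec hbc'
      have hedges_split : c₂.edges = q₁.edges ++ q₂.edges := by
        rw [← hspec, Walk.edges_append]
      have hsupp_split : c₂.support.tail = q₁.support.tail ++ q₂.support.tail := by
        have h1 : c₂.support = q₁.support ++ q₂.support.tail := by
          rw [← hspec, Walk.support_append]
        rw [h1, Walk.support_eq_cons q₁]
        simp
      have hdisj_t : ∀ u, u ∈ q₁.support.tail → u ∈ q₂.support.tail → False := by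
        have h1 := hc'.support_nodup
        rw [hsupp_split] at h1
        exact fun u h2 h3 => (List.nodup_append.mp h1).2.2 u h2 u h3 rfl
      have hedisj : ∀ e, e ∈ q₁.edges → e ∈ q₂.edges → False := by
        have h1 := hc'.isCircuit.isTrail.edges_nodup
        rw [hedges_split] at h1
        exact fun e h2 h3 => (List.nodup_append.mp h1).2.2 e h2 e h3 rfl
      have hpc₂ : ∀ e ∈ p.edges, e ∈ c₂.edges := fun e he =>
        hperm.perm.mem_iff.mpr (hpc e he)
      have hall : ∀ e ∈ p.edges, e ∈ q₁.edges ∨ e ∈ q₂.edges := by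
        intro e he
        have h1 := hpc₂ _ he
        rw [hedges_split] at h1
        exact List.mem_append.mp h1
      have hint' : ∀ u ∈ p.support, u ≠ a → u ≠ b → u ≠ a ∧ u ≠ b :=
        fun u _ h1 h2 => ⟨h1, h2⟩
      have hint'' : ∀ u ∈ p.support, u ≠ a → u ≠ b → u ≠ b ∧ u ≠ a :=
        fun u _ h1 h2 => ⟨h2, h1⟩
      have hlensum : q₁.length + q₂.length = c₂.length := by
        rw [← hspec, Walk.length_append]
      obtain ⟨w, hwc, hwnp, hwlen⟩ :
          ∃ w : G.Walk a b, (∀ e ∈ w.edges, e ∈ c₂.edges) ∧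
            (∀ e ∈ w.edges, e ∉ p.edges) ∧ w.length ≤ c.length := by
        rcases hall _ hfeP with hf | hf
        · have hpq₁ : ∀ e ∈ p.edges, e ∈ q₁.edges :=
            FrameAux.arc_side q₁ q₂ hdisj_t p hp hint' hall (fun _ => hf)
          refine ⟨q₂.reverse, ?_, ?_, ?_⟩
          · intro e he
            rw [Walk.edges_reverse, List.mem_reverse] at he
            rw [hedges_split]
            exact List.mem_append_right _ he
          · intro e he hep
            rw [Walk.edges_reverse, List.mem_reverse] at he
            exact hedisj e (hpq₁ e hep) he
          · rw [Walk.length_reverse]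
            omega
        · have hpq₂ : ∀ e ∈ p.edges, e ∈ q₂.edges :=
            FrameAux.arc_side q₂ q₁ (fun u h1 h2 => hdisj_t u h2 h1) p hp hint''
              (fun e he => (hall e he).symm) (fun _ => hf)
          refine ⟨q₁, ?_, ?_, ?_⟩
          · intro e he
            rw [hedges_split]
            exact List.mem_append_left _ he
          · intro e he hep
            exact hedisj e he (hpq₂ e hep)
          · omega
      have hwH : ∀ e ∈ w.bypass.edges, e ∈ H.edgeSet := by
        intro e he
        have he' := Walk.edges_bypass_subset w he
        rcases (hHP e).1 (hce e (hperm.perm.mem_iff.mp (hwc e he'))) with h1 | h1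
        · exact h1
        · exact absurd h1 (hwnp e he')
      by_cases hXw : ∃ x ∈ X, x ∈ w.bypass.support
      · have hwide := hX.2 a b w.bypass w.bypass_isPath hwH ⟨ha, haX⟩ ⟨hb, hbX⟩ hXw
        calc ℓ ≤ w.bypass.length := hwide
          _ ≤ w.length := w.length_bypass_le
          _ ≤ c.length := hwlen
      · exfalso
        push_neg at hXw
        exact hsep (FrameAux.reach_del w.bypass ha haX hb hbX hwH
          (fun u hu hux => hXw u hux hu))
    · have hAllH : ∀ e ∈ c.edges, e ∈ H.edgeSet := by
        intro e he
        rcases (hHP e).1 (hce e he) with h1 | h1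
        · exact h1
        · exact (hcp ⟨e, he, h1⟩).elim
      exact hH.2 v c hc hAllH
  · -- branch vertices increase
    have hsub : {v : V | (H.neighborSet v).ncard = 3} ⊆
        {v : V | ((H ⊔ p.toSubgraph).neighborSet v).ncard = 3} := by
      intro v hv3
      have hv3' : (H.neighborSet v).ncard = 3 := hv3
      have hv : v ∈ H.verts := by
        have hne : (H.neighborSet v).Nonempty := by
          apply Set.nonempty_of_ncard_ne_zero
          rw [hv3']
          omega
        obtain ⟨w, hw⟩ := hne
        exact H.edge_vert hw
      have hvX : v ∈ X := hbranch v hv hv3'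
      have hvp : v ∉ p.support := fun hc => havoid v hc hvX
      show ((H ⊔ p.toSubgraph).neighborSet v).ncard = 3
      rw [hnbr_same v hvp]
      exact hv3'
    have hanot : a ∉ {v : V | (H.neighborSet v).ncard = 3} := by
      show ¬ (H.neighborSet a).ncard = 3
      rw [hdeg2 a ha haX]
      omega
    exact Set.ncard_lt_ncard
      ((Set.ssubset_iff_of_subset hsub).2 ⟨a, hdeg_a, hanot⟩) (Set.toFinite _)
end

section
/- Let G be a finite graph and ℓ ≥ 1 an integer. Let H be a subgraph of G, let X ⊆ V(H) be a wide set, and let P be an H-path of G − X whose two endvertices lie in two distinct connected components of H − X. Then every cycle of H ∪ P that uses an edge of P has length at least ℓ. -/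
open SimpleGraph

namespace WideAux

variable {V : Type*} {G : SimpleGraph V}

/-- Decompose a walk at an edge occurring on it. -/
lemma decompAtEdge {a b : V} (p : G.Walk a b) (e : Sym2 V) (he : e ∈ p.edges) :
    ∃ (x y : V) (pre : G.Walk a x) (h : G.Adj x y) (post : G.Walk y b),
      p = pre.append (Walk.cons h post) ∧ e = s(x, y) := by
  induction p with
  | nil => simp at he
  | cons h' p' ih =>
    rw [Walk.edges_cons, List.mem_cons] at he
    rcases he with he | he
    · exact ⟨_, _, Walk.nil, h', p', rfl, he⟩
    · obtain ⟨x, y, pre, h, post, hdec, rfl⟩ := ih he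
      exact ⟨x, y, Walk.cons h' pre, h, post, by rw [Walk.cons_append, hdec], rfl⟩

/-- In a walk with no repeated vertices, an edge containing the final vertex is
the last edge. -/
lemma lastEdge {s b y : V} (q : G.Walk s b) (hnd : q.support.Nodup)
    (he : s(b, y) ∈ q.edges) :
    ∃ (q₀ : G.Walk s y) (h : G.Adj y b), q = q₀.append (Walk.cons h Walk.nil) := by
  induction q with
  | nil => simp at he
  | cons h' q' ih =>
    rw [Walk.support_cons, List.nodup_cons] at hnd
    rw [Walk.edges_cons, List.mem_cons] at he
    rcases he with he | he
    · rw [Sym2.eq_iff] at he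
      rcases he with ⟨hb, hy⟩ | ⟨hb, hy⟩
      · exfalso; subst hb; exact hnd.1 q'.end_mem_support
      · subst hy; subst hb
        cases q' with
        | nil => exact ⟨Walk.nil, h', rfl⟩
        | cons h'' q'' =>
          exfalso
          rw [Walk.support_cons, List.nodup_cons] at hnd
          exact hnd.2.1 q''.end_mem_support
    · obtain ⟨q₀, h, hdec⟩ := ih hnd.2 he
      exact ⟨Walk.cons h' q₀, h, by rw [hdec, Walk.cons_append]⟩

/-- Given a closed walk at `x` with no repeated edges and no repeated interior
vertices, and an edge `s(x,y)` on it, extract the complementary arc from `y`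
to `x` avoiding that edge. -/
lemma arcOfCycle {x y : V} (w : G.Walk x x) (hnd : w.edges.Nodup)
    (htail : w.support.tail.Nodup) (he : s(x, y) ∈ w.edges) :
    ∃ w' : G.Walk y x, (∀ e ∈ w'.edges, e ∈ w.edges) ∧ w'.edges.Nodup ∧
      s(x, y) ∉ w'.edges := by
  cases w with
  | nil => simp at he
  | @cons _ z _ h₁ q₁ =>
    rw [Walk.edges_cons, List.nodup_cons] at hnd
    rw [Walk.edges_cons, List.mem_cons] at he
    have hsupp : q₁.support.Nodup := by simpa [Walk.support_cons] using htail
    rcases he with he | he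
    · rw [Sym2.eq_iff] at he
      rcases he with ⟨-, hy⟩ | ⟨hx, -⟩
      · subst hy
        exact ⟨q₁, fun e heq => by rw [Walk.edges_cons]; exact List.mem_cons_of_mem _ heq,
          hnd.2, hnd.1⟩
      · exact absurd hx h₁.ne
    · obtain ⟨q₀, h, hdec⟩ := lastEdge q₁ hsupp he
      have hq₁e : q₁.edges = q₀.edges ++ [s(y, x)] := by
        rw [hdec, Walk.edges_append, Walk.edges_cons, Walk.edges_nil]
      rw [hq₁e, List.nodup_append] at hnd
      refine ⟨(Walk.cons h₁ q₀).reverse, ?_, ?_, ?_⟩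
      · intro e hee
        rw [Walk.edges_reverse, List.mem_reverse, Walk.edges_cons, List.mem_cons] at hee
        rw [Walk.edges_cons, List.mem_cons]
        rcases hee with hee | hee
        · exact Or.inl hee
        · exact Or.inr (by rw [hq₁e]; exact List.mem_append_left _ hee)
      · rw [Walk.edges_reverse, List.nodup_reverse, Walk.edges_cons, List.nodup_cons]
        exact ⟨fun hmem => hnd.1 (List.mem_append_left _ hmem), hnd.2.1⟩
      · intro hmem
        rw [Walk.edges_reverse, List.mem_reverse, Walk.edges_cons, List.mem_cons] at hmem
        rcases hmem with hmem | hmem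
        · exact hnd.1 (by rw [← hmem]; exact List.mem_append_right _ (by rw [Sym2.eq_swap]; simp))
        · exact hnd.2.2.2 _ hmem _ (by simp) Sym2.eq_swap

/-- Walking along a piece of `p` inside a subwalk of the cycle `c`: since the
interior vertices of `p` lie outside `H`, the cycle is forced to follow `p`,
and what remains is an arc avoiding the indicated edges of `p`. -/
lemma walkAlong {H : G.Subgraph} {a₀ b₀ : V} {p : G.Walk a₀ b₀} {v : V} {c : G.Walk v v}
    (hc : ∀ e ∈ c.edges, e ∈ (H ⊔ p.toSubgraph).edgeSet) {s w₀ : V} (q : G.Walk s w₀) :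
    ∀ {t : V} (d : G.Walk s t) (other : List (Sym2 V)),
      q.support.Nodup → (∀ e ∈ q.edges, e ∈ p.edges) →
      (∀ u ∈ q.support, u ≠ w₀ → u ∉ H.verts) →
      t ∉ q.support →
      d.edges.Nodup → (∀ e ∈ d.edges, e ∈ c.edges) →
      (∀ e ∈ d.edges, e ∈ p.edges → e ∈ q.edges ∨ e ∈ other) →
      (∀ u ∈ q.support, u ≠ w₀ → ∀ e ∈ other, u ∉ e) →
      ∃ r : G.Walk w₀ t, r.edges.Nodup ∧ (∀ e ∈ r.edges, e ∈ d.edges) ∧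
        (∀ e ∈ r.edges, e ∈ p.edges → e ∈ other) := by
  induction q with
  | nil =>
    intro t d other _ _ _ _ hnd hsub hJ _
    exact ⟨d, hnd, fun e he => he, fun e he hpe => (hJ e he hpe).resolve_left (by simp)⟩
  | @cons s m w₀ hadj q' ih =>
    intro t d other hq0 hq1 hq2 ht hnd hsub hJ hother
    rw [Walk.support_cons, List.nodup_cons] at hq0
    have hs_ne : s ≠ w₀ := by
      intro h; exact hq0.1 (h ▸ q'.end_mem_support)
    have hsH : s ∉ H.verts := hq2 s (Walk.start_mem_support _) hs_ne
    have hst : s ≠ t := by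
      intro h; exact ht (h ▸ Walk.start_mem_support _)
    cases d with
    | nil => exact absurd rfl hst
    | @cons _ z _ hdz d₂ =>
      rw [Walk.edges_cons, List.nodup_cons] at hnd
      have he1 : s(s, z) ∈ c.edges := hsub _ (by rw [Walk.edges_cons]; exact List.mem_cons_self)
      have hep : s(s, z) ∈ p.edges := by
        have := hc _ he1
        rw [Subgraph.edgeSet_sup, Set.mem_union] at this
        rcases this with h | h
        · exact absurd (H.edge_vert (Subgraph.mem_edgeSet.mp h)) hsH
        · rwa [Walk.edgeSet_toSubgraph, Walk.mem_edgeSet] at h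
      have heq : z = m := by
        rcases hJ _ (by rw [Walk.edges_cons]; exact List.mem_cons_self) hep with h | h
        · rw [Walk.edges_cons, List.mem_cons] at h
          rcases h with h | h
          · exact Sym2.congr_right.mp h
          · exact absurd (Walk.fst_mem_support_of_mem_edges q' h) hq0.1
        · exact absurd (Sym2.mem_mk_left s z)
            (hother s (Walk.start_mem_support _) hs_ne _ h)
      subst heq
      obtain ⟨r, h1, h2, h3⟩ := ih d₂ other hq0.2
        (fun e he => hq1 e (by rw [Walk.edges_cons]; exact List.mem_cons_of_mem _ he))
        (fun u hu hne => hq2 u (by rw [Walk.support_cons]; exact List.mem_cons_of_mem _ hu) hne)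
        (fun h => ht (by rw [Walk.support_cons]; exact List.mem_cons_of_mem _ h))
        hnd.2
        (fun e he => hsub e (by rw [Walk.edges_cons]; exact List.mem_cons_of_mem _ he))
        (fun e he hpe => by
          rcases hJ e (by rw [Walk.edges_cons]; exact List.mem_cons_of_mem _ he) hpe with h | h
          · rw [Walk.edges_cons, List.mem_cons] at h
            rcases h with h | h
            · exact absurd (h ▸ he) hnd.1
            · exact Or.inl h
          · exact Or.inr h)
        (fun u hu hne => hother u (by rw [Walk.support_cons]; exact List.mem_cons_of_mem _ hu) hne)
      exact ⟨r, h1, fun e he => by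
        rw [Walk.edges_cons]; exact List.mem_cons_of_mem _ (h2 e he), h3⟩

/-- A walk in `G` whose edges lie in `H` and whose support avoids `X` gives
reachability in `(H.deleteVerts X).coe`. -/
lemma transferReach {H : G.Subgraph} {X : Set V} {u w : V} (q : G.Walk u w) :
    ∀ (hu : u ∈ H.verts) (huX : u ∉ X) (hw : w ∈ H.verts) (hwX : w ∉ X),
      (∀ e ∈ q.edges, e ∈ H.edgeSet) → (∀ z ∈ q.support, z ∉ X) →
      (H.deleteVerts X).coe.Reachable ⟨u, hu, huX⟩ ⟨w, hw, hwX⟩ := by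
  induction q with
  | nil => intro hu huX hw hwX _ _; exact Reachable.refl _
  | @cons u m w hadj q' ih =>
    intro hu huX hw hwX hE hS
    have hH : H.Adj u m := Subgraph.mem_edgeSet.mp
      (hE _ (by rw [Walk.edges_cons]; exact List.mem_cons_self))
    have hm : m ∈ H.verts := H.edge_vert hH.symm
    have hmX : m ∉ X := hS m (by
      rw [Walk.support_cons]
      exact List.mem_cons_of_mem _ q'.start_mem_support)
    have hadj' : (H.deleteVerts X).coe.Adj ⟨u, hu, huX⟩ ⟨m, hm, hmX⟩ := by
      show (H.deleteVerts X).Adj u m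
      rw [Subgraph.deleteVerts_adj]
      exact ⟨hu, huX, hm, hmX, hH⟩
    exact hadj'.reachable.trans (ih hm hmX hw hwX
      (fun e he => hE e (by rw [Walk.edges_cons]; exact List.mem_cons_of_mem _ he))
      (fun z hz => hS z (by rw [Walk.support_cons]; exact List.mem_cons_of_mem _ hz)))

end WideAux

/-- If `X ⊆ V(H)` is wide and `P` is an `H`-path of `G − X` linking two distinct
components of `H − X`, then every cycle of `H ∪ P` using an edge of `P` has
length at least `ℓ`. -/
theorem wide_augmentation_long_cycles {V : Type*} [Fintype V] {G : SimpleGraph V}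
    (ℓ : ℕ) (hℓ : 1 ≤ ℓ) (H : G.Subgraph) (X : Set V) (hX : IsWide ℓ H X)
    {a b : V} (p : G.Walk a b) (hp : p.IsPath)
    (ha : a ∈ H.verts) (haX : a ∉ X) (hb : b ∈ H.verts) (hbX : b ∉ X)
    (hint : ∀ u ∈ p.support, u ≠ a → u ≠ b → u ∉ H.verts)
    (hedge : ∃ e ∈ p.edges, e ∉ H.edgeSet)
    (havoid : ∀ u ∈ p.support, u ∉ X)
    (hsep : ¬ (H.deleteVerts X).coe.Reachable ⟨a, ha, haX⟩ ⟨b, hb, hbX⟩) :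
    ∀ (v : V) (c : G.Walk v v), c.IsCycle →
      (∀ e ∈ c.edges, e ∈ (H ⊔ p.toSubgraph).edgeSet) →
      (∃ e ∈ c.edges, e ∈ p.edges) → ℓ ≤ c.length := by
  classical
  intro v c hcyc hcE hexists
  obtain ⟨e, heC, heP⟩ := hexists
  obtain ⟨x, y, pre, hxy, post, hpdec, rfl⟩ := WideAux.decompAtEdge p e heP
  subst hpdec
  have hsupp_eq : (pre.append (SimpleGraph.Walk.cons hxy post)).support =
      pre.support ++ post.support := by
    rw [Walk.support_append, Walk.support_cons]
    rfl
  have hnodup := hp.support_nodup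
  rw [hsupp_eq, List.nodup_append] at hnodup
  have hedges_eq : (pre.append (SimpleGraph.Walk.cons hxy post)).edges =
      pre.edges ++ (s(x, y) :: post.edges) := by
    rw [Walk.edges_append, Walk.edges_cons]
  have hx_supp : x ∈ c.support := c.fst_mem_support_of_mem_edges heC
  have hdperm : (c.rotate x hx_supp).edges.Perm c.edges := (c.rotate_edges x hx_supp).perm
  have hdcyc : (c.rotate x hx_supp).IsCycle := hcyc.rotate hx_supp
  have heD : s(x, y) ∈ (c.rotate x hx_supp).edges := hdperm.mem_iff.mpr heC
  obtain ⟨w', hw'sub, hw'nd, hw'notin⟩ := WideAux.arcOfCycle (c.rotate x hx_supp)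
    hdcyc.isCircuit.isTrail.edges_nodup hdcyc.support_nodup heD
  have hw'c : ∀ e' ∈ w'.edges, e' ∈ c.edges := fun e' he' =>
    hdperm.mem_iff.mp (hw'sub e' he')
  have haPre : a ∈ pre.support := pre.start_mem_support
  have hbPost : b ∈ post.support := post.end_mem_support
  have hxPre : x ∈ pre.support := pre.end_mem_support
  obtain ⟨r₁, hr₁nd, hr₁sub, hr₁p⟩ := WideAux.walkAlong hcE post w' pre.edges
    hnodup.2.1
    (fun e' he' => by rw [hedges_eq]; exact List.mem_append_right _ (List.mem_cons_of_mem _ he'))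
    (fun u hu hub => hint u (by rw [hsupp_eq]; exact List.mem_append_right _ hu)
      (fun h => hnodup.2.2 _ haPre _ (h ▸ hu) rfl) hub)
    (fun h => hnodup.2.2 _ hxPre _ h rfl)
    hw'nd hw'c
    (fun e' he' hpe => by
      rw [hedges_eq, List.mem_append, List.mem_cons] at hpe
      rcases hpe with h | h | h
      · exact Or.inr h
      · exact absurd (h ▸ he') hw'notin
      · exact Or.inl h)
    (fun u hu hub e' he' => by
      induction e' using Sym2.ind with
      | _ c₁ c₂ =>
        intro hmem
        rw [Sym2.mem_iff] at hmem
        rcases hmem with rfl | rfl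
        · exact hnodup.2.2 _ (pre.fst_mem_support_of_mem_edges he') _ hu rfl
        · exact hnodup.2.2 _ (pre.snd_mem_support_of_mem_edges he') _ hu rfl)
  obtain ⟨r₂, hr₂nd, hr₂sub, hr₂p⟩ := WideAux.walkAlong hcE pre.reverse r₁.reverse
    ([] : List (Sym2 V))
    (by rw [Walk.support_reverse]; exact List.nodup_reverse.mpr hnodup.1)
    (fun e' he' => by
      rw [Walk.edges_reverse, List.mem_reverse] at he'
      rw [hedges_eq]; exact List.mem_append_left _ he')
    (fun u hu hua => by
      rw [Walk.support_reverse, List.mem_reverse] at hu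
      exact hint u (by rw [hsupp_eq]; exact List.mem_append_left _ hu) hua
        (fun h => hnodup.2.2 _ hu _ (h ▸ hbPost) rfl))
    (by rw [Walk.support_reverse, List.mem_reverse]; exact fun h => hnodup.2.2 _ h _ hbPost rfl)
    (by rw [Walk.edges_reverse]; exact List.nodup_reverse.mpr hr₁nd)
    (fun e' he' => by
      rw [Walk.edges_reverse, List.mem_reverse] at he'
      exact hw'c e' (hr₁sub e' he'))
    (fun e' he' hpe => by
      rw [Walk.edges_reverse, List.mem_reverse] at he'
      exact Or.inl (by rw [Walk.edges_reverse, List.mem_reverse]; exact hr₁p e' he' hpe))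
    (fun u _ _ e' he' => absurd he' (List.not_mem_nil))
  have hr₂c : ∀ e' ∈ r₂.edges, e' ∈ c.edges := fun e' he' => by
    have h2 := hr₂sub e' he'
    rw [Walk.edges_reverse, List.mem_reverse] at h2
    exact hw'c e' (hr₁sub e' h2)
  have hr₂H : ∀ e' ∈ r₂.edges, e' ∈ H.edgeSet := fun e' he' => by
    have hce := hcE e' (hr₂c e' he')
    rw [Subgraph.edgeSet_sup, Set.mem_union] at hce
    rcases hce with h | h
    · exact h
    · rw [Walk.edgeSet_toSubgraph, Walk.mem_edgeSet] at h
      exact absurd (hr₂p e' he' h) (List.not_mem_nil)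
  have hπH : ∀ e' ∈ r₂.bypass.edges, e' ∈ H.edgeSet := fun e' he' =>
    hr₂H e' (r₂.edges_bypass_subset he')
  by_cases hXcase : ∃ x' ∈ X, x' ∈ r₂.bypass.support
  · have hlen := hX.2 a b r₂.bypass r₂.bypass_isPath hπH ⟨ha, haX⟩ ⟨hb, hbX⟩ hXcase
    calc ℓ ≤ r₂.bypass.length := hlen
      _ ≤ r₂.length := r₂.length_bypass_le
      _ = r₂.edges.length := (Walk.length_edges _).symm
      _ ≤ c.edges.length := (hr₂nd.subperm (fun {e'} he' => hr₂c e' he')).length_le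
      _ = c.length := Walk.length_edges _
  · exact absurd (WideAux.transferReach r₂.bypass ha haX hb hbX hπH
      (fun z hz hzX => hXcase ⟨z, hzX, hz⟩)) hsep
end
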